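/- arXiv:1812.01824 — 2 statements merged into one kernel-verified Lean document; each statement's English description precedes it below -/
import Mathlib

section
/- Let E be a topological space, P a Borel probability measure on E, ι an index type, l a filter on ι, and (P_i)_{i∈ι} a family of Borel probability measures on E. Suppose there are continuous functions φ_m : E → ℝ (m ∈ ℕ) with 0 ≤ φ_m ≤ 1 such that (i) lim_{m→∞} ∫_E φ_m dP = 1, and (ii) for every m ∈ ℕ and every bounded continuous function F : E → ℝ, the net i ↦ ∫_E φ_m·F dP_i tends along l to ∫_E φ_m·F dP. Then for every bounded continuous function F : E → ℝ, the net i ↦ ∫_E F dP_i tends along l to ∫_E F dP. -/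
open MeasureTheory Filter

lemma integrable_of_bdd {E : Type*} [TopologicalSpace E] [MeasurableSpace E] [BorelSpace E]
    (μ : Measure E) [IsProbabilityMeasure μ] {F : E → ℝ} (hFc : Continuous F)
    {C : ℝ} (hC : ∀ x, |F x| ≤ C) : Integrable F μ := by
  refine (integrable_const C).mono' hFc.aestronglyMeasurable ?_
  exact Filter.Eventually.of_forall fun x => (by simpa using hC x)

lemma cutoff_key {E : Type*} [TopologicalSpace E] [MeasurableSpace E] [BorelSpace E]
    (μ : Measure E) [IsProbabilityMeasure μ] (φm F : E → ℝ) (hφc : Continuous φm)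
    (hφ01 : ∀ x, φm x ∈ Set.Icc (0:ℝ) 1) (hFc : Continuous F) {C : ℝ} (hC0 : 0 ≤ C)
    (hC : ∀ x, |F x| ≤ C) :
    |(∫ x, F x ∂μ) - ∫ x, φm x * F x ∂μ| ≤ C * (1 - ∫ x, φm x ∂μ) := by
  have hφb : ∀ x, |φm x| ≤ 1 := fun x => abs_le.2 ⟨le_trans (by norm_num) (hφ01 x).1, (hφ01 x).2⟩
  have hiF : Integrable F μ := integrable_of_bdd μ hFc hC
  have hiφ : Integrable φm μ := integrable_of_bdd μ hφc hφb
  have hiφF : Integrable (fun x => φm x * F x) μ := by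
    refine integrable_of_bdd μ (hφc.mul hFc) (C := C) fun x => ?_
    rw [abs_mul]
    calc |φm x| * |F x| ≤ 1 * C := by
          exact mul_le_mul (hφb x) (hC x) (abs_nonneg _) zero_le_one
      _ = C := one_mul C
  rw [← integral_sub hiF hiφF]
  calc |∫ x, (F x - φm x * F x) ∂μ| ≤ ∫ x, |F x - φm x * F x| ∂μ := by
        simpa [Real.norm_eq_abs] using norm_integral_le_integral_norm (fun x => F x - φm x * F x) (μ := μ)
    _ ≤ ∫ x, C * (1 - φm x) ∂μ := by
        refine integral_mono_of_nonneg (Filter.Eventually.of_forall fun x => abs_nonneg _)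
          (((integrable_const C).sub (hiφ.const_mul C)).congr
            (Filter.Eventually.of_forall fun x => by simp; ring)) ?_
        refine Filter.Eventually.of_forall fun x => ?_
        show |F x - φm x * F x| ≤ C * (1 - φm x)
        have h1x : (0:ℝ) ≤ 1 - φm x := by linarith [(hφ01 x).2]
        have : F x - φm x * F x = (1 - φm x) * F x := by ring
        rw [this, abs_mul, abs_of_nonneg h1x, mul_comm]
        exact mul_le_mul_of_nonneg_right (hC x) h1x |>.trans_eq (mul_comm _ _) |>.trans_eq (mul_comm _ _)
    _ = C * (1 - ∫ x, φm x ∂μ) := by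
        rw [integral_const_mul, integral_sub (integrable_const 1) hiφ]
        simp

/-- Abstract cutoff argument. Let `E` be a topological space, `P` a Borel
probability measure on `E`, `l` a filter on an index type `ι` and `(P_i)` Borel probability
measures on `E`. Suppose there are continuous `φ_m : E → ℝ` with `0 ≤ φ_m ≤ 1` such that
`∫ φ_m dP → 1` as `m → ∞`, and for every `m` and every bounded continuous `F : E → ℝ`,
`∫ φ_m · F dP_i → ∫ φ_m · F dP` along `l`. Then for every bounded continuous `F : E → ℝ`,
`∫ F dP_i → ∫ F dP` along `l`. -/
theorem cutoff_weak_convergence {E : Type*} [TopologicalSpace E] [MeasurableSpace E]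
    [BorelSpace E] {ι : Type*} (l : Filter ι)
    (P : Measure E) [IsProbabilityMeasure P]
    (Pi : ι → Measure E) [∀ i, IsProbabilityMeasure (Pi i)]
    (φ : ℕ → E → ℝ) (hφc : ∀ m, Continuous (φ m))
    (hφ01 : ∀ m x, φ m x ∈ Set.Icc (0:ℝ) 1)
    (h1 : Tendsto (fun m : ℕ => ∫ x, φ m x ∂P) atTop (nhds 1))
    (h2 : ∀ m : ℕ, ∀ F : E → ℝ, Continuous F → (∃ C, ∀ x, |F x| ≤ C) →
      Tendsto (fun i => ∫ x, φ m x * F x ∂(Pi i)) l (nhds (∫ x, φ m x * F x ∂P))) :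
    ∀ F : E → ℝ, Continuous F → (∃ C, ∀ x, |F x| ≤ C) →
      Tendsto (fun i => ∫ x, F x ∂(Pi i)) l (nhds (∫ x, F x ∂P)) := by
  intro F hFc ⟨C, hC⟩
  have hne : Nonempty E := by
    by_contra h
    have h' : IsEmpty E := not_nonempty_iff.mp h
    have h1 : P Set.univ = 1 := measure_univ
    rw [Set.univ_eq_empty_iff.2 h', measure_empty] at h1
    exact zero_ne_one h1
  have hC0 : 0 ≤ C := le_trans (abs_nonneg _) (hC Classical.ofNonempty)
  rw [Metric.tendsto_nhds]
  intro ε hε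
  have hC1 : 0 < C + 1 := by linarith
  -- choose m
  have hεm : 0 < ε / (8 * (C + 1)) := by positivity
  have hm : ∀ᶠ m in atTop, |(∫ x, φ m x ∂P) - 1| < ε / (8 * (C + 1)) := by
    have := (Metric.tendsto_nhds.mp h1) _ hεm
    simpa [Real.dist_eq] using this
  obtain ⟨m, hmP⟩ := hm.exists
  have hPle : 1 - (∫ x, φ m x ∂P) < ε / (8 * (C + 1)) := by
    rw [abs_sub_comm] at hmP; exact lt_of_le_of_lt (le_abs_self _) hmP
  have hPnn : 0 ≤ 1 - (∫ x, φ m x ∂P) := by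
    have : (∫ x, φ m x ∂P) ≤ ∫ x, (1:ℝ) ∂P := by
      refine integral_mono (integrable_of_bdd P (hφc m)
        (C := 1) fun x => abs_le.2 ⟨by linarith [(hφ01 m x).1], (hφ01 m x).2⟩)
        (integrable_const 1) fun x => (hφ01 m x).2
    simpa using this
  -- the two filter convergences
  have hmidF := (Metric.tendsto_nhds.mp (h2 m F hFc ⟨C, hC⟩)) (ε/4) (by positivity)
  have hone := h2 m (fun _ => (1:ℝ)) continuous_const ⟨1, fun x => by norm_num⟩
  simp only [mul_one] at hone
  have honeε := (Metric.tendsto_nhds.mp hone) _ hεm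
  filter_upwards [hmidF, honeε] with i hmid hone'
  rw [Real.dist_eq] at hmid hone' ⊢
  have key := cutoff_key P (φ m) F (hφc m) (hφ01 m) hFc hC0 hC
  have keyi := cutoff_key (Pi i) (φ m) F (hφc m) (hφ01 m) hFc hC0 hC
  have hPinn : 0 ≤ 1 - (∫ x, φ m x ∂(Pi i)) := by
    have : (∫ x, φ m x ∂(Pi i)) ≤ ∫ x, (1:ℝ) ∂(Pi i) := by
      refine integral_mono (integrable_of_bdd (Pi i) (hφc m)
        (C := 1) fun x => abs_le.2 ⟨by linarith [(hφ01 m x).1], (hφ01 m x).2⟩)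
        (integrable_const 1) fun x => (hφ01 m x).2
    simpa using this
  have hPi' : 1 - (∫ x, φ m x ∂(Pi i)) < 2 * (ε / (8 * (C + 1))) := by
    have : (∫ x, φ m x ∂P) - (∫ x, φ m x ∂(Pi i)) < ε / (8 * (C + 1)) := by
      calc (∫ x, φ m x ∂P) - (∫ x, φ m x ∂(Pi i))
          ≤ |(∫ x, φ m x ∂(Pi i)) - (∫ x, φ m x ∂P)| := by
            rw [abs_sub_comm]; exact le_abs_self _
        _ < ε / (8 * (C + 1)) := hone'
    linarith
  have e1 : |(∫ x, F x ∂(Pi i)) - ∫ x, φ m x * F x ∂(Pi i)| ≤ C * (1 - ∫ x, φ m x ∂(Pi i)) := keyi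
  have e3 : |(∫ x, F x ∂P) - ∫ x, φ m x * F x ∂P| ≤ C * (1 - ∫ x, φ m x ∂P) := key
  have b1 : C * (1 - ∫ x, φ m x ∂(Pi i)) < (C + 1) * (2 * (ε / (8 * (C + 1)))) := by
    have := mul_le_mul_of_nonneg_right (le_of_lt (lt_add_one C)) hPinn
    calc C * (1 - ∫ x, φ m x ∂(Pi i)) ≤ (C + 1) * (1 - ∫ x, φ m x ∂(Pi i)) := this
      _ < (C + 1) * (2 * (ε / (8 * (C + 1)))) := by
          exact mul_lt_mul_of_pos_left hPi' hC1
  have b3 : C * (1 - ∫ x, φ m x ∂P) < (C + 1) * (ε / (8 * (C + 1))) := by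
    have := mul_le_mul_of_nonneg_right (le_of_lt (lt_add_one C)) hPnn
    calc C * (1 - ∫ x, φ m x ∂P) ≤ (C + 1) * (1 - ∫ x, φ m x ∂P) := this
      _ < (C + 1) * (ε / (8 * (C + 1))) := mul_lt_mul_of_pos_left hPle hC1
  have hsimp : (C + 1) * (ε / (8 * (C + 1))) = ε / 8 := by field_simp
  have habs : |(∫ x, F x ∂(Pi i)) - ∫ x, F x ∂P| ≤
      |(∫ x, F x ∂(Pi i)) - ∫ x, φ m x * F x ∂(Pi i)|
      + |(∫ x, φ m x * F x ∂(Pi i)) - ∫ x, φ m x * F x ∂P|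
      + |(∫ x, F x ∂P) - ∫ x, φ m x * F x ∂P| := by
    calc |(∫ x, F x ∂(Pi i)) - ∫ x, F x ∂P|
        ≤ |(∫ x, F x ∂(Pi i)) - ∫ x, φ m x * F x ∂(Pi i)|
          + |(∫ x, φ m x * F x ∂(Pi i)) - ∫ x, F x ∂P| := abs_sub_le _ _ _
      _ ≤ |(∫ x, F x ∂(Pi i)) - ∫ x, φ m x * F x ∂(Pi i)|
          + (|(∫ x, φ m x * F x ∂(Pi i)) - ∫ x, φ m x * F x ∂P|
            + |(∫ x, φ m x * F x ∂P) - ∫ x, F x ∂P|) := by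
            gcongr; exact abs_sub_le _ _ _
      _ = _ := by rw [abs_sub_comm (∫ x, φ m x * F x ∂P)]; ring
  rw [hsimp] at b3
  have b1' : C * (1 - ∫ x, φ m x ∂(Pi i)) < ε/4 := by
    rw [show (C + 1) * (2 * (ε / (8 * (C + 1)))) = ε/4 by field_simp; ring] at b1
    exact b1
  linarith [habs, e1, e3, hmid, b1', b3]
end

section
/- Let n ≥ 1, 0 = t_0 < t_1 < … < t_N = T with increments Δ_i = t_i − t_{i−1}, x_0 ∈ ℝ^n, and let μ be the probability measure on (ℝ^n)^N with density ∏_{i=1}^N (2π Δ_i)^{-n/2} exp(−|x_i − x_{i−1}|²/(2Δ_i)) with respect to Lebesgue measure. Let f : (ℝ^n)^N → ℝ be continuously differentiable with compact support, and let k_0 = 0, k_1, …, k_N ∈ ℝ^n. Then ∫ Σ_{i=1}^N ⟨∇_{x_i} f(x), k_i⟩ dμ(x) = ∫ f(x) · Σ_{i=1}^N ⟨k_i − k_{i−1}, x_i − x_{i−1}⟩/Δ_i dμ(x), where ∇_{x_i} f denotes the gradient of f in the i-th ℝ^n-block of variables. -/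
open MeasureTheory Real

/-- Finite-dimensional integration by parts. Let `0 = t_0 < ⋯ < t_N = T` with
increments `Δ_i`, `x_0 ∈ ℝ^n`, and let `μ` be the probability measure on `(ℝ^n)^N` with
Gaussian density `∏_i (2πΔ_i)^{-n/2} exp(−|x_i − x_{i−1}|²/(2Δ_i))` with respect to Lebesgue
measure. For `f` continuously differentiable with compact support and vectors `k_1,…,k_N`
(with `k_0 = 0`):
`∫ Σ_i ⟨∇_{x_i} f(x), k_i⟩ dμ = ∫ f(x) · Σ_i ⟨k_i − k_{i−1}, x_i − x_{i−1}⟩/Δ_i dμ`. -/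
theorem gaussian_integration_by_parts (n N : ℕ) (hn : 1 ≤ n) (hN : 1 ≤ N)
    (T : ℝ) (hT : 0 < T) (t : Fin (N + 1) → ℝ) (htm : StrictMono t)
    (ht0 : t 0 = 0) (htT : t (Fin.last N) = T)
    (Δ : Fin N → ℝ) (hΔ : ∀ i, Δ i = t i.succ - t i.castSucc)
    (x₀ : EuclideanSpace ℝ (Fin n))
    (μ : Measure (Fin N → EuclideanSpace ℝ (Fin n)))
    (hμ : μ = volume.withDensity fun x => ENNReal.ofReal
      (∏ i : Fin N,
        (2 * π * Δ i) ^ (-(n : ℝ) / 2) *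
          Real.exp (-‖(Fin.cons x₀ x : Fin (N + 1) → EuclideanSpace ℝ (Fin n)) i.succ -
            (Fin.cons x₀ x : Fin (N + 1) → EuclideanSpace ℝ (Fin n)) i.castSucc‖ ^ 2 /
            (2 * Δ i))))
    (f : (Fin N → EuclideanSpace ℝ (Fin n)) → ℝ)
    (hf : ContDiff ℝ 1 f) (hfc : HasCompactSupport f)
    (k : Fin N → EuclideanSpace ℝ (Fin n)) :
    ∫ x, (∑ i : Fin N, fderiv ℝ f x (Pi.single i (k i))) ∂μ
      = ∫ x, f x *
          (∑ i : Fin N,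
            (inner ℝ ((Fin.cons 0 k : Fin (N + 1) → EuclideanSpace ℝ (Fin n)) i.succ -
                (Fin.cons 0 k : Fin (N + 1) → EuclideanSpace ℝ (Fin n)) i.castSucc)
              ((Fin.cons x₀ x : Fin (N + 1) → EuclideanSpace ℝ (Fin n)) i.succ -
                (Fin.cons x₀ x : Fin (N + 1) → EuclideanSpace ℝ (Fin n)) i.castSucc) : ℝ) /
              Δ i) ∂μ := by
  classical
  have hAddHaar : Measure.IsAddHaarMeasure
      (volume : Measure (Fin N → EuclideanSpace ℝ (Fin n))) := Measure.pi.isAddHaarMeasure _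
  have hΔpos : ∀ i, 0 < Δ i := fun i => by
    rw [hΔ]; exact sub_pos.2 (htm (Fin.castSucc_lt_succ : i.castSucc < i.succ))
  -- the continuous linear map `x ↦ Fin.cons 0 x`
  set consL : (Fin N → EuclideanSpace ℝ (Fin n)) →L[ℝ]
      (Fin (N + 1) → EuclideanSpace ℝ (Fin n)) :=
    ContinuousLinearMap.pi
      (fun j => Fin.cases 0 (fun i => ContinuousLinearMap.proj i) j) with hconsL
  have hconsL_apply : ∀ x : Fin N → EuclideanSpace ℝ (Fin n),
      consL x = Fin.cons 0 x := by
    intro x; funext j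
    induction j using Fin.cases with
    | zero => simp [hconsL]
    | succ i => simp [hconsL]
  set L : Fin N → ((Fin N → EuclideanSpace ℝ (Fin n)) →L[ℝ] EuclideanSpace ℝ (Fin n)) :=
    fun i => ((ContinuousLinearMap.proj i.succ : (Fin (N + 1) → EuclideanSpace ℝ (Fin n)) →L[ℝ]
        EuclideanSpace ℝ (Fin n)) -
      (ContinuousLinearMap.proj i.castSucc : (Fin (N + 1) → EuclideanSpace ℝ (Fin n)) →L[ℝ]
        EuclideanSpace ℝ (Fin n))).comp consL
      with hLdef
  have hL : ∀ i (x : Fin N → EuclideanSpace ℝ (Fin n)),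
      L i x = (Fin.cons 0 x : Fin (N + 1) → EuclideanSpace ℝ (Fin n)) i.succ -
        (Fin.cons 0 x : Fin (N + 1) → EuclideanSpace ℝ (Fin n)) i.castSucc := by
    intro i x
    simp [hLdef, hconsL_apply]
  set d : Fin N → (Fin N → EuclideanSpace ℝ (Fin n)) → EuclideanSpace ℝ (Fin n) :=
    fun i x => (Fin.cons x₀ x : Fin (N + 1) → EuclideanSpace ℝ (Fin n)) i.succ -
      (Fin.cons x₀ x : Fin (N + 1) → EuclideanSpace ℝ (Fin n)) i.castSucc with hddef
  have hd_apply : ∀ i (x : Fin N → EuclideanSpace ℝ (Fin n)),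
      d i x = (Fin.cons x₀ x : Fin (N + 1) → EuclideanSpace ℝ (Fin n)) i.succ -
        (Fin.cons x₀ x : Fin (N + 1) → EuclideanSpace ℝ (Fin n)) i.castSucc := by
    intro i x; simp only [hddef]
  have hsplit : ∀ x : Fin N → EuclideanSpace ℝ (Fin n),
      (Fin.cons x₀ x : Fin (N + 1) → EuclideanSpace ℝ (Fin n)) =
        (Fin.cons x₀ 0 : Fin (N + 1) → EuclideanSpace ℝ (Fin n)) + Fin.cons 0 x := by
    intro x; funext j
    induction j using Fin.cases with
    | zero => simp
    | succ i => simp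
  have hd_affine : ∀ i, d i = fun x =>
      ((Fin.cons x₀ (0 : Fin N → EuclideanSpace ℝ (Fin n)) :
          Fin (N + 1) → EuclideanSpace ℝ (Fin n)) i.succ -
        (Fin.cons x₀ (0 : Fin N → EuclideanSpace ℝ (Fin n)) :
          Fin (N + 1) → EuclideanSpace ℝ (Fin n)) i.castSucc) + L i x := by
    intro i; funext x
    rw [hd_apply]
    simp only [hsplit x, hL, Pi.add_apply]
    abel
  have hd : ∀ i x, HasFDerivAt (d i) (L i) x := by
    intro i x
    rw [hd_affine i]
    exact ((L i).hasFDerivAt).const_add _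
  have hd_cont : ∀ i, Continuous (d i) := fun i => by
    rw [hd_affine i]; exact continuous_const.add (L i).continuous
  -- the exponent and its derivative
  set q : (Fin N → EuclideanSpace ℝ (Fin n)) → ℝ :=
    fun x => ∑ i, (2 * Δ i)⁻¹ * ‖d i x‖ ^ 2 with hqdef
  set Q : (Fin N → EuclideanSpace ℝ (Fin n)) →
      ((Fin N → EuclideanSpace ℝ (Fin n)) →L[ℝ] ℝ) :=
    fun x => ∑ i, (2 * Δ i)⁻¹ • (2 • (innerSL ℝ (d i x)).comp (L i)) with hQdef
  have hq : ∀ x, HasFDerivAt q (Q x) x := fun x =>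
    HasFDerivAt.fun_sum fun i _ => ((hd i x).norm_sq).const_mul _
  have hq_cont : Continuous q := by
    rw [hqdef]
    exact continuous_finset_sum _ fun i _ =>
      continuous_const.mul ((hd_cont i).norm.pow 2)
  -- the density
  set C : ℝ := ∏ i, (2 * π * Δ i) ^ (-(n : ℝ) / 2) with hCdef
  set ρ : (Fin N → EuclideanSpace ℝ (Fin n)) → ℝ :=
    fun x => C * Real.exp (-q x) with hρdef
  have hCpos : 0 < C := Finset.prod_pos fun i _ =>
    Real.rpow_pos_of_pos (by have := hΔpos i; have := Real.pi_pos; positivity) _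
  have hρpos : ∀ x, 0 < ρ x := fun x => mul_pos hCpos (Real.exp_pos _)
  have hρeq : ∀ x : Fin N → EuclideanSpace ℝ (Fin n),
      (∏ i : Fin N,
        (2 * π * Δ i) ^ (-(n : ℝ) / 2) *
          Real.exp (-‖(Fin.cons x₀ x : Fin (N + 1) → EuclideanSpace ℝ (Fin n)) i.succ -
            (Fin.cons x₀ x : Fin (N + 1) → EuclideanSpace ℝ (Fin n)) i.castSucc‖ ^ 2 /
            (2 * Δ i))) = ρ x := by
    intro x
    rw [hρdef, Finset.prod_mul_distrib, ← Real.exp_sum]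
    congr 2
    rw [hqdef, ← Finset.sum_neg_distrib]
    refine Finset.sum_congr rfl fun i _ => ?_
    rw [← hd_apply i x]
    field_simp
  have hρ : ∀ x, HasFDerivAt ρ (C • (Real.exp (-q x) • (-Q x))) x := by
    intro x
    exact (((hq x).neg).exp).const_mul C
  have hρdiff : Differentiable ℝ ρ := fun x => (hρ x).differentiableAt
  have hρcont : Continuous ρ := hρdiff.continuous
  -- the discrete stochastic integral
  set S : (Fin N → EuclideanSpace ℝ (Fin n)) → ℝ := fun x =>
    ∑ i : Fin N,
      (inner ℝ ((Fin.cons 0 k : Fin (N + 1) → EuclideanSpace ℝ (Fin n)) i.succ -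
          (Fin.cons 0 k : Fin (N + 1) → EuclideanSpace ℝ (Fin n)) i.castSucc)
        ((Fin.cons x₀ x : Fin (N + 1) → EuclideanSpace ℝ (Fin n)) i.succ -
          (Fin.cons x₀ x : Fin (N + 1) → EuclideanSpace ℝ (Fin n)) i.castSucc) : ℝ) /
        Δ i with hSdef
  have hS_apply : ∀ x : Fin N → EuclideanSpace ℝ (Fin n),
      S x = ∑ i : Fin N,
        (inner ℝ ((Fin.cons 0 k : Fin (N + 1) → EuclideanSpace ℝ (Fin n)) i.succ -
            (Fin.cons 0 k : Fin (N + 1) → EuclideanSpace ℝ (Fin n)) i.castSucc)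
          ((Fin.cons x₀ x : Fin (N + 1) → EuclideanSpace ℝ (Fin n)) i.succ -
            (Fin.cons x₀ x : Fin (N + 1) → EuclideanSpace ℝ (Fin n)) i.castSucc) : ℝ) /
          Δ i := by
    intro x; simp only [hSdef]
  have hQk : ∀ x, Q x k = S x := by
    intro x
    rw [hQdef, hS_apply, ContinuousLinearMap.sum_apply]
    refine Finset.sum_congr rfl fun i _ => ?_
    rw [ContinuousLinearMap.smul_apply, ContinuousLinearMap.smul_apply,
      ContinuousLinearMap.comp_apply, innerSL_apply_apply, hL, ← hd_apply i x,
      real_inner_comm]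
    simp only [smul_eq_mul, nsmul_eq_mul, Nat.cast_ofNat]
    have h2 := (hΔpos i).ne'
    field_simp
  have hρk : ∀ x, fderiv ℝ ρ x k = -(ρ x * S x) := by
    intro x
    rw [(hρ x).fderiv]
    simp only [ContinuousLinearMap.smul_apply, ContinuousLinearMap.neg_apply,
      smul_eq_mul, hQk x, hρdef]
    ring
  have hScont : Continuous S := by
    rw [hSdef]
    refine continuous_finset_sum _ fun i _ => Continuous.div_const ?_ _
    exact Continuous.inner continuous_const (hd_cont i)
  -- moving from `μ` to Lebesgue measure
  have hμ' : μ = volume.withDensity fun x => ENNReal.ofReal (ρ x) := by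
    rw [hμ]; congr 1; funext x; rw [hρeq x]
  have hint : ∀ g : (Fin N → EuclideanSpace ℝ (Fin n)) → ℝ,
      ∫ x, g x ∂μ = ∫ x, ρ x * g x := by
    intro g
    rw [hμ']
    have hm : Measurable fun x => (ρ x).toNNReal :=
      (continuous_real_toNNReal.comp hρcont).measurable
    rw [show (fun x => ENNReal.ofReal (ρ x)) = fun x => ((ρ x).toNNReal : ENNReal) from rfl,
      integral_withDensity_eq_integral_smul hm g]
    refine integral_congr_ae (Filter.Eventually.of_forall fun x => ?_)
    simp [NNReal.smul_def, Real.coe_toNNReal _ (hρpos x).le]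
  -- integrability and the integration by parts theorem
  have hderivf_cont : Continuous fun x => fderiv ℝ f x k :=
    (hf.continuous_fderiv one_ne_zero).clm_apply continuous_const
  have hρkcont : Continuous fun x => fderiv ℝ ρ x k := by
    have : (fun x => fderiv ℝ ρ x k) = fun x => -(ρ x * S x) := funext hρk
    rw [this]; exact (hρcont.mul hScont).neg
  have I1 : Integrable (fun x => fderiv ℝ f x k * ρ x) volume :=
    (hderivf_cont.mul hρcont).integrable_of_hasCompactSupport
      (((hfc.fderiv_apply ℝ k).mul_right :
        HasCompactSupport fun x => fderiv ℝ f x k * ρ x))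
  have I2 : Integrable (fun x => f x * fderiv ℝ ρ x k) volume :=
    ((hf.continuous.mul hρkcont)).integrable_of_hasCompactSupport
      ((hfc.mul_right : HasCompactSupport fun x => f x * fderiv ℝ ρ x k))
  have I3 : Integrable (fun x => f x * ρ x) volume :=
    ((hf.continuous.mul hρcont)).integrable_of_hasCompactSupport
      ((hfc.mul_right : HasCompactSupport fun x => f x * ρ x))
  have IBP := integral_mul_fderiv_eq_neg_fderiv_mul_of_integrable I1 I2 I3
    (fun x _ => (hf.differentiable one_ne_zero) x) (fun x _ => hρdiff x)
  -- assembling everything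
  have hsum : ∀ x, (∑ i, fderiv ℝ f x (Pi.single i (k i))) = fderiv ℝ f x k := by
    intro x
    rw [← map_sum, Finset.univ_sum_single]
  have e1 : (fun x => ρ x * (∑ i, fderiv ℝ f x (Pi.single i (k i)))) =
      fun x => fderiv ℝ f x k * ρ x := by
    funext x; rw [hsum x, mul_comm]
  have e2 : (fun x => f x * fderiv ℝ ρ x k) = fun x => -(ρ x * (f x * S x)) := by
    funext x; rw [hρk x]; ring
  rw [hint, hint, e1]
  have e3 : (fun x => ρ x *
      (f x * ∑ i : Fin N,
        (inner ℝ ((Fin.cons 0 k : Fin (N + 1) → EuclideanSpace ℝ (Fin n)) i.succ -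
            (Fin.cons 0 k : Fin (N + 1) → EuclideanSpace ℝ (Fin n)) i.castSucc)
          ((Fin.cons x₀ x : Fin (N + 1) → EuclideanSpace ℝ (Fin n)) i.succ -
            (Fin.cons x₀ x : Fin (N + 1) → EuclideanSpace ℝ (Fin n)) i.castSucc) : ℝ) /
          Δ i)) = fun x => -(f x * fderiv ℝ ρ x k) := by
    funext x
    rw [hρk x, ← hS_apply x]
    ring
  rw [e3, integral_neg, IBP, neg_neg]
end
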